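/- arXiv:1307.8192 — 7 statements merged into one kernel-verified Lean document; each statement's English description precedes it below -/
import Mathlib

section
/- In Morpion Solitaire 5D, no play of length 133 exists; equivalently, the score of every play of Morpion Solitaire 5D is at most 132. -/
/-- The four directions of Morpion Solitaire. -/
def Dir : Set (ℤ × ℤ) := {(1, 0), (0, 1), (1, 1), (1, -1)}

/-- The line (segment) of length 5 starting at `q` in direction `d`:
the set `{q + t • d : t ∈ {0,1,2,3,4}}`. -/
def seg (q d : ℤ × ℤ) : Set (ℤ × ℤ) := {p | ∃ t : ℕ, t ≤ 4 ∧ p = q + (t : ℤ) • d}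

/-- The initial configuration of 36 crosses. -/
def S0 : Set (ℤ × ℤ) := {p |
  ((p.2 = 0 ∨ p.2 = 9) ∧ 3 ≤ p.1 ∧ p.1 ≤ 6) ∨
  ((p.1 = 0 ∨ p.1 = 9) ∧ 3 ≤ p.2 ∧ p.2 ≤ 6) ∨
  ((p.1 = 3 ∨ p.1 = 6) ∧ ((0 ≤ p.2 ∧ p.2 ≤ 3) ∨ (6 ≤ p.2 ∧ p.2 ≤ 9))) ∨
  ((p.2 = 3 ∨ p.2 = 6) ∧ ((0 ≤ p.1 ∧ p.1 ≤ 3) ∨ (6 ≤ p.1 ∧ p.1 ≤ 9)))}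

/-- A play of Morpion Solitaire 5D of length `N`: crosses `p i`, and lines
`seg (q i) (d i)` in directions `d i ∈ Dir`, subject to the rules of 5D.
(Index `i : Fin N` corresponds to move `i + 1`.) -/
structure Play (N : ℕ) where
  p : Fin N → ℤ × ℤ
  q : Fin N → ℤ × ℤ
  d : Fin N → ℤ × ℤ
  d_mem : ∀ i, d i ∈ Dir
  /-- rule (1): the new cross is placed on an empty point -/
  p_not_S0 : ∀ i, p i ∉ S0
  p_new : ∀ i j : Fin N, j < i → p j ≠ p i
  /-- rule (2): the new line passes through the new cross -/
  p_mem : ∀ i, p i ∈ seg (q i) (d i)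
  /-- rule (3): the new line passes only through existing crosses -/
  seg_sub : ∀ i, seg (q i) (d i) ⊆ S0 ∪ {x | ∃ j : Fin N, j ≤ i ∧ p j = x}
  /-- rule (4): two lines in the same direction are disjoint -/
  disj : ∀ i j : Fin N, j < i → d j = d i → seg (q i) (d i) ∩ seg (q j) (d j) = ∅

/-- The initial configuration as an explicit finite set. -/
noncomputable def S0F : Finset (ℤ × ℤ) :=
  (Finset.Icc 0 9 ×ˢ Finset.Icc 0 9).filter (fun p =>
  ((p.2 = 0 ∨ p.2 = 9) ∧ 3 ≤ p.1 ∧ p.1 ≤ 6) ∨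
  ((p.1 = 0 ∨ p.1 = 9) ∧ 3 ≤ p.2 ∧ p.2 ≤ 6) ∨
  ((p.1 = 3 ∨ p.1 = 6) ∧ ((0 ≤ p.2 ∧ p.2 ≤ 3) ∨ (6 ≤ p.2 ∧ p.2 ≤ 9))) ∨
  ((p.2 = 3 ∨ p.2 = 6) ∧ ((0 ≤ p.1 ∧ p.1 ≤ 3) ∨ (6 ≤ p.1 ∧ p.1 ≤ 9))))

set_option maxHeartbeats 4000000 in
lemma S0F_card : S0F.card = 36 := by decide

lemma S0_subset_S0F : S0 ⊆ ↑S0F := by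
  rintro ⟨x, y⟩ h
  simp only [S0, Set.mem_setOf_eq] at h
  rw [Finset.mem_coe]
  simp only [S0F, Finset.mem_filter, Finset.mem_product, Finset.mem_Icc]
  refine ⟨⟨?_, ?_⟩, ?_⟩ <;> omega

lemma mem_seg_of_mem_image {q d : ℤ × ℤ} {x : ℤ × ℤ}
    (hx : x ∈ (Finset.range 5).image (fun k : ℕ => q + (k : ℤ) • d)) : x ∈ seg q d := by
  simp only [Finset.mem_image, Finset.mem_range] at hx
  obtain ⟨k, hk, rfl⟩ := hx
  exact ⟨k, by omega, rfl⟩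

lemma seg_finset_card {N : ℕ} (P : Play N) (i : Fin N) :
    ((Finset.range 5).image (fun k : ℕ => P.q i + (k : ℤ) • P.d i)).card = 5 := by
  rw [Finset.card_image_of_injOn, Finset.card_range]
  intro k1 _ k2 _ h
  have h' : (k1 : ℤ) • P.d i = (k2 : ℤ) • P.d i := by
    have := h
    simpa using congrArg (fun z => z - P.q i) this
  have hv := P.d_mem i
  simp only [Dir, Set.mem_insert_iff, Set.mem_singleton_iff] at hv
  rcases hv with hv | hv | hv | hv <;>
    (rw [hv] at h'; simp only [Prod.smul_mk, smul_eq_mul, Prod.mk.injEq] at h'; omega)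

/-- Key counting lemma: all lines in direction `v` live in the position at the last
move in direction `v`, and are pairwise disjoint. -/
lemma key {N : ℕ} (P : Play N) (v : ℤ × ℤ)
    (hne : (Finset.univ.filter (fun i : Fin N => P.d i = v)).Nonempty) :
    5 * (Finset.univ.filter (fun i : Fin N => P.d i = v)).card
      ≤ 37 + ((Finset.univ.filter (fun i : Fin N => P.d i = v)).max' hne).val := by
  set M := Finset.univ.filter (fun i : Fin N => P.d i = v) with hM
  set t := M.max' hne with ht
  set F : Fin N → Finset (ℤ × ℤ) :=
    fun i => (Finset.range 5).image (fun k : ℕ => P.q i + (k : ℤ) • P.d i) with hF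
  have hdisj : ∀ i ∈ M, ∀ j ∈ M, i ≠ j → Disjoint (F i) (F j) := by
    intro i hi j hj hij
    have hdi : P.d i = v := (Finset.mem_filter.mp hi).2
    have hdj : P.d j = v := (Finset.mem_filter.mp hj).2
    rw [Finset.disjoint_left]
    intro x hxi hxj
    have hxi' : x ∈ seg (P.q i) (P.d i) := mem_seg_of_mem_image hxi
    have hxj' : x ∈ seg (P.q j) (P.d j) := mem_seg_of_mem_image hxj
    rcases lt_or_gt_of_ne hij with hlt | hlt
    · have h0 := P.disj j i hlt (hdi.trans hdj.symm)
      exact Set.eq_empty_iff_forall_notMem.mp h0 x ⟨hxj', hxi'⟩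
    · have h0 := P.disj i j hlt (hdj.trans hdi.symm)
      exact Set.eq_empty_iff_forall_notMem.mp h0 x ⟨hxi', hxj'⟩
  have hcard : (M.biUnion F).card = 5 * M.card := by
    rw [Finset.card_biUnion hdisj]
    rw [Finset.sum_congr rfl (fun i _ => seg_finset_card P i)]
    rw [Finset.sum_const, smul_eq_mul, mul_comm]
  have hsub : M.biUnion F ⊆ S0F ∪ (Finset.univ.filter (fun j : Fin N => j ≤ t)).image P.p := by
    intro x hx
    obtain ⟨i, hi, hxi⟩ := Finset.mem_biUnion.mp hx
    have hx' : x ∈ seg (P.q i) (P.d i) := mem_seg_of_mem_image hxi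
    rcases P.seg_sub i hx' with h | ⟨j, hji, hpj⟩
    · exact Finset.mem_union_left _ (S0_subset_S0F h)
    · refine Finset.mem_union_right _ (Finset.mem_image.mpr ⟨j, ?_, hpj⟩)
      simp only [Finset.mem_filter, Finset.mem_univ, true_and]
      exact le_trans hji (M.le_max' i hi)
  have hfil : (Finset.univ.filter (fun j : Fin N => j ≤ t)).card ≤ t.val + 1 := by
    have := Finset.card_le_card_of_injOn (f := fun j : Fin N => j.val)
      (s := Finset.univ.filter (fun j : Fin N => j ≤ t)) (t := Finset.range (t.val + 1))
      (by intro j hj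
          simp only [Finset.mem_coe, Finset.mem_filter, Finset.mem_univ, true_and] at hj
          simp only [Finset.mem_coe, Finset.mem_range]
          exact Nat.lt_succ_of_le hj)
      (by intro a _ b _ hab; exact Fin.val_injective hab)
    simpa using this
  calc 5 * M.card = (M.biUnion F).card := hcard.symm
    _ ≤ (S0F ∪ (Finset.univ.filter (fun j : Fin N => j ≤ t)).image P.p).card :=
        Finset.card_le_card hsub
    _ ≤ S0F.card + ((Finset.univ.filter (fun j : Fin N => j ≤ t)).image P.p).card :=
        Finset.card_union_le _ _
    _ ≤ 36 + (t.val + 1) := by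
        have h1 := Finset.card_image_le (s := Finset.univ.filter (fun j : Fin N => j ≤ t))
          (f := P.p)
        rw [S0F_card]
        omega
    _ = 37 + t.val := by omega

lemma partition_card {N : ℕ} (P : Play N) :
    (Finset.univ.filter (fun i : Fin N => P.d i = ((1, 0) : ℤ × ℤ))).card
  + (Finset.univ.filter (fun i : Fin N => P.d i = ((0, 1) : ℤ × ℤ))).card
  + (Finset.univ.filter (fun i : Fin N => P.d i = ((1, 1) : ℤ × ℤ))).card
  + (Finset.univ.filter (fun i : Fin N => P.d i = ((1, -1) : ℤ × ℤ))).card = N := by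
  have h : ∀ i : Fin N, P.d i = ((1, 0) : ℤ × ℤ) ∨ P.d i = ((0, 1) : ℤ × ℤ)
      ∨ P.d i = ((1, 1) : ℤ × ℤ) ∨ P.d i = ((1, -1) : ℤ × ℤ) := by
    intro i
    have := P.d_mem i
    simpa [Dir] using this
  rw [Finset.card_filter, Finset.card_filter, Finset.card_filter, Finset.card_filter,
    ← Finset.sum_add_distrib, ← Finset.sum_add_distrib, ← Finset.sum_add_distrib]
  have hone : ∀ i : Fin N,
      ((if P.d i = ((1, 0) : ℤ × ℤ) then 1 else 0)
        + (if P.d i = ((0, 1) : ℤ × ℤ) then 1 else 0)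
        + (if P.d i = ((1, 1) : ℤ × ℤ) then 1 else 0)
        + (if P.d i = ((1, -1) : ℤ × ℤ) then 1 else 0)) = 1 := by
    intro i
    rcases h i with hh | hh | hh | hh <;> rw [hh] <;> decide
  rw [Finset.sum_congr rfl (fun i _ => hone i), Finset.sum_const, smul_eq_mul, mul_one,
    Finset.card_univ, Fintype.card_fin]

/-- In Morpion Solitaire 5D, the score of every play is at most 132;
equivalently, no play of length 133 exists. -/
theorem morpion5D_upper_bound_132 : ∀ N : ℕ, Play N → N ≤ 132 := by
  intro N P
  have H : ∀ (v : ℤ × ℤ) (kk : ℕ), ∃ tk : ℕ,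
      (5 * (Finset.univ.filter (fun i : Fin N => P.d i = v)).card ≤ 37 + tk) ∧
      ((Finset.univ.filter (fun i : Fin N => P.d i = v)).card = 0 ∨ tk < N) ∧
      (tk = N + kk ∨ ∃ i : Fin N, tk = i.val ∧ P.d i = v) := by
    intro v kk
    by_cases hne : (Finset.univ.filter (fun i : Fin N => P.d i = v)).Nonempty
    · refine ⟨((Finset.univ.filter (fun i : Fin N => P.d i = v)).max' hne).val,
        key P v hne, Or.inr (Fin.is_lt _), Or.inr ⟨_, rfl, ?_⟩⟩
      have hmem := Finset.max'_mem _ hne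
      exact (Finset.mem_filter.mp hmem).2
    · rw [Finset.not_nonempty_iff_eq_empty] at hne
      exact ⟨N + kk, by simp [hne], Or.inl (by simp [hne]), Or.inl rfl⟩
  obtain ⟨t1, hb1, hl1, hs1⟩ := H ((1, 0) : ℤ × ℤ) 1
  obtain ⟨t2, hb2, hl2, hs2⟩ := H ((0, 1) : ℤ × ℤ) 2
  obtain ⟨t3, hb3, hl3, hs3⟩ := H ((1, 1) : ℤ × ℤ) 3
  obtain ⟨t4, hb4, hl4, hs4⟩ := H ((1, -1) : ℤ × ℤ) 4
  have dist : ∀ (ta tb : ℕ) (va vb : ℤ × ℤ) (ka kb : ℕ), va ≠ vb → ka ≠ kb →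
      (ta = N + ka ∨ ∃ i : Fin N, ta = i.val ∧ P.d i = va) →
      (tb = N + kb ∨ ∃ i : Fin N, tb = i.val ∧ P.d i = vb) → ta ≠ tb := by
    rintro ta tb va vb ka kb hv hk (rfl | ⟨i, rfl, hi⟩) (rfl | ⟨j, rfl, hj⟩)
    · omega
    · have := j.isLt; omega
    · have := i.isLt; omega
    · intro hh
      have hij : i = j := Fin.ext hh
      subst hij
      exact hv (hi.symm.trans hj)
  have d12 := dist t1 t2 _ _ 1 2 (by decide) (by decide) hs1 hs2
  have d13 := dist t1 t3 _ _ 1 3 (by decide) (by decide) hs1 hs3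
  have d14 := dist t1 t4 _ _ 1 4 (by decide) (by decide) hs1 hs4
  have d23 := dist t2 t3 _ _ 2 3 (by decide) (by decide) hs2 hs3
  have d24 := dist t2 t4 _ _ 2 4 (by decide) (by decide) hs2 hs4
  have d34 := dist t3 t4 _ _ 3 4 (by decide) (by decide) hs3 hs4
  have hsum := partition_card P
  clear hs1 hs2 hs3 hs4 dist H
  omega
end

section
/- In Morpion Solitaire 5D, no play of length 139 exists; equivalently, the score of every play of Morpion Solitaire 5D is at most 138. -/
/- ---------- auxiliary material ---------- -/

/-- The 36 points of `S0` as a list. -/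
def S0L : List (ℤ × ℤ) :=
  [(0,3), (0,4), (0,5), (0,6), (1,3), (1,6), (2,3), (2,6), (3,0), (3,1), (3,2), (3,3),
   (3,6), (3,7), (3,8), (3,9), (4,0), (4,9), (5,0), (5,9), (6,0), (6,1), (6,2), (6,3),
   (6,6), (6,7), (6,8), (6,9), (7,3), (7,6), (8,3), (8,6), (9,3), (9,4), (9,5), (9,6)]

lemma mem_S0L_of_mem_S0 : ∀ x : ℤ × ℤ, x ∈ S0 → x ∈ S0L := by
  rintro ⟨a, b⟩ h
  simp only [S0, Set.mem_setOf_eq] at h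
  rcases h with ⟨hb, h1, h2⟩ | ⟨ha, h1, h2⟩ | ⟨ha, h⟩ | ⟨hb, h⟩
  · rcases hb with hb | hb <;> subst hb <;> interval_cases a <;> decide
  · rcases ha with ha | ha <;> subst ha <;> interval_cases b <;> decide
  · rcases ha with ha | ha <;> subst ha <;> rcases h with ⟨h1, h2⟩ | ⟨h1, h2⟩ <;>
      interval_cases b <;> decide
  · rcases hb with hb | hb <;> subst hb <;> rcases h with ⟨h1, h2⟩ | ⟨h1, h2⟩ <;>
      interval_cases a <;> decide

/-- The segment as a finset. -/
def segF (q d : ℤ × ℤ) : Finset (ℤ × ℤ) :=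
  (Finset.range 5).image (fun t : ℕ => q + (t : ℤ) • d)

lemma mem_segF (q d x : ℤ × ℤ) : x ∈ segF q d ↔ x ∈ seg q d := by
  simp only [segF, Finset.mem_image, Finset.mem_range, seg, Set.mem_setOf_eq]
  constructor
  · rintro ⟨t, ht, rfl⟩; exact ⟨t, by omega, rfl⟩
  · rintro ⟨t, ht, rfl⟩; exact ⟨t, by omega, rfl⟩

lemma card_segF (q d : ℤ × ℤ) (hd : d ≠ 0) : (segF q d).card = 5 := by
  rw [segF, Finset.card_image_of_injOn, Finset.card_range]
  intro t _ s _ h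
  have h' : (t : ℤ) • d = (s : ℤ) • d := add_left_cancel h
  have h1 : (t : ℤ) * d.1 = (s : ℤ) * d.1 := by
    have := congrArg Prod.fst h'; simpa using this
  have h2 : (t : ℤ) * d.2 = (s : ℤ) * d.2 := by
    have := congrArg Prod.snd h'; simpa using this
  have hne : d.1 ≠ 0 ∨ d.2 ≠ 0 := by
    by_contra hc
    push_neg at hc
    exact hd (Prod.ext hc.1 hc.2)
  rcases hne with h3 | h3
  · exact_mod_cast mul_right_cancel₀ h3 h1
  · exact_mod_cast mul_right_cancel₀ h3 h2

/-- In Morpion Solitaire 5D, the score of every play is at most 138;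
equivalently, no play of length 139 exists. -/
theorem morpion5D_upper_bound_138 : ∀ N : ℕ, Play N → N ≤ 138 := by
  intro N P
  by_contra hN'
  push_neg at hN'
  have hN : 139 ≤ N := hN'
  -- the segment finsets
  have hd0 : ∀ i, P.d i ≠ 0 := by
    intro i
    have h := P.d_mem i
    simp only [Dir, Set.mem_insert_iff, Set.mem_singleton_iff] at h
    rcases h with h | h | h | h <;> rw [h] <;> decide
  set Sg : Fin N → Finset (ℤ × ℤ) := fun i => segF (P.q i) (P.d i) with hSg
  have hcard : ∀ i, (Sg i).card = 5 := fun i => card_segF _ _ (hd0 i)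
  -- the universe of all points of the final configuration
  set U : Finset (ℤ × ℤ) := S0L.toFinset ∪ Finset.univ.image P.p with hU
  have hpU : ∀ k : Fin N, P.p k ∈ U :=
    fun k => Finset.mem_union_right _ (Finset.mem_image_of_mem _ (Finset.mem_univ k))
  have hsub : ∀ i, Sg i ⊆ U := by
    intro i x hx
    have hx' : x ∈ seg (P.q i) (P.d i) := (mem_segF _ _ _).1 hx
    rcases (Set.mem_union _ _ _).1 (P.seg_sub i hx') with h | h
    · exact Finset.mem_union_left _ (List.mem_toFinset.2 (mem_S0L_of_mem_S0 x h))
    · simp only [Set.mem_setOf_eq] at h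
      obtain ⟨j, _, rfl⟩ := h
      exact hpU j
  -- the multiplicity of a point
  set m : (ℤ × ℤ) → ℕ := fun x => (Finset.univ.filter (fun i => x ∈ Sg i)).card with hm
  -- double counting
  have hcount : 5 * N = ∑ x ∈ U, m x := by
    have h1 : ∀ i : Fin N, (Sg i).card = ∑ x ∈ U, (if x ∈ Sg i then 1 else 0) := by
      intro i
      have h2 : U.filter (fun x => x ∈ Sg i) = Sg i := by
        rw [Finset.filter_mem_eq_inter]
        exact Finset.inter_eq_right.mpr (hsub i)
      calc (Sg i).card = (U.filter (fun x => x ∈ Sg i)).card := by rw [h2]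
        _ = ∑ x ∈ U, (if x ∈ Sg i then 1 else 0) := Finset.card_filter _ _
    calc 5 * N = ∑ _i : Fin N, 5 := by simp [mul_comm]
      _ = ∑ i : Fin N, (Sg i).card := by
          exact Finset.sum_congr rfl (fun i _ => (hcard i).symm)
      _ = ∑ i : Fin N, ∑ x ∈ U, (if x ∈ Sg i then 1 else 0) :=
          Finset.sum_congr rfl (fun i _ => h1 i)
      _ = ∑ x ∈ U, ∑ i : Fin N, (if x ∈ Sg i then 1 else 0) := Finset.sum_comm
      _ = ∑ x ∈ U, m x := by
          refine Finset.sum_congr rfl (fun x _ => ?_)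
          exact (Finset.card_filter _ _).symm
  -- each point is covered at most 4 times
  have hm4 : ∀ x, m x ≤ 4 := by
    intro x
    have hinj : ∀ i ∈ Finset.univ.filter (fun i => x ∈ Sg i),
        ∀ j ∈ Finset.univ.filter (fun i => x ∈ Sg i), P.d i = P.d j → i = j := by
      intro i hi j hj hij
      by_contra hne
      have hxi : x ∈ seg (P.q i) (P.d i) := (mem_segF _ _ _).1 (Finset.mem_filter.mp hi).2
      have hxj : x ∈ seg (P.q j) (P.d j) := (mem_segF _ _ _).1 (Finset.mem_filter.mp hj).2
      rcases lt_or_gt_of_ne hne with hlt | hlt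
      · have hdisj := P.disj j i hlt hij
        have : x ∈ seg (P.q j) (P.d j) ∩ seg (P.q i) (P.d i) := ⟨hxj, hxi⟩
        rw [hdisj] at this
        exact this
      · have hdisj := P.disj i j hlt hij.symm
        have : x ∈ seg (P.q i) (P.d i) ∩ seg (P.q j) (P.d j) := ⟨hxi, hxj⟩
        rw [hdisj] at this
        exact this
    have hmap : ∀ i ∈ Finset.univ.filter (fun i => x ∈ Sg i),
        P.d i ∈ ({((1:ℤ),(0:ℤ)), (0,1), (1,1), (1,-1)} : Finset (ℤ × ℤ)) := by
      intro i _
      have h := P.d_mem i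
      simp only [Dir, Set.mem_insert_iff, Set.mem_singleton_iff] at h
      rcases h with h | h | h | h <;> rw [h] <;> decide
    have := Finset.card_le_card_of_injOn P.d hmap hinj
    have hc4 : ({((1:ℤ),(0:ℤ)), (0,1), (1,1), (1,-1)} : Finset (ℤ × ℤ)).card ≤ 4 := by decide
    exact le_trans this hc4
  -- a cross can only be covered by its own line or later ones
  have horder : ∀ k i : Fin N, P.p k ∈ Sg i → (k : ℕ) ≤ (i : ℕ) := by
    intro k i hk
    have hk' : P.p k ∈ seg (P.q i) (P.d i) := (mem_segF _ _ _).1 hk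
    rcases (Set.mem_union _ _ _).1 (P.seg_sub i hk') with h | h
    · exact absurd h (P.p_not_S0 k)
    · simp only [Set.mem_setOf_eq] at h
      obtain ⟨j, hji, hpj⟩ := h
      have hjk : j = k := by
        rcases lt_trichotomy j k with hlt | heq | hlt
        · exact absurd hpj (P.p_new k j hlt)
        · exact heq
        · exact absurd hpj.symm (P.p_new j k hlt)
      subst hjk
      exact hji
  -- the last three crosses
  have hp_inj : ∀ i j : Fin N, P.p i = P.p j → i = j := by
    intro i j h
    rcases lt_trichotomy i j with hlt | heq | hlt
    · exact absurd h (P.p_new j i hlt)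
    · exact heq
    · exact absurd h.symm (P.p_new i j hlt)
  have h1N : N - 1 < N := by omega
  have h2N : N - 2 < N := by omega
  have h3N : N - 3 < N := by omega
  set i1 : Fin N := ⟨N - 1, h1N⟩ with hi1
  set i2 : Fin N := ⟨N - 2, h2N⟩ with hi2
  set i3 : Fin N := ⟨N - 3, h3N⟩ with hi3
  have hm1 : m (P.p i1) ≤ 1 := by
    have hss : Finset.univ.filter (fun i => P.p i1 ∈ Sg i) ⊆ {i1} := by
      intro i hi
      have h := horder i1 i (Finset.mem_filter.mp hi).2
      have hlt := i.isLt
      simp only [Finset.mem_singleton]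
      have hv : (i : ℕ) = N - 1 := by simp only [hi1] at h; omega
      exact Fin.ext hv
    calc m (P.p i1) ≤ ({i1} : Finset (Fin N)).card := Finset.card_le_card hss
      _ = 1 := Finset.card_singleton _
  have hm2 : m (P.p i2) ≤ 2 := by
    have hss : Finset.univ.filter (fun i => P.p i2 ∈ Sg i) ⊆ {i2, i1} := by
      intro i hi
      have h := horder i2 i (Finset.mem_filter.mp hi).2
      have hlt := i.isLt
      simp only [Finset.mem_insert, Finset.mem_singleton]
      simp only [hi2] at h
      rcases Nat.lt_or_ge (i : ℕ) (N - 1) with hc | hc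
      · left; exact Fin.ext (show (i : ℕ) = N - 2 by omega)
      · right; exact Fin.ext (show (i : ℕ) = N - 1 by omega)
    calc m (P.p i2) ≤ ({i2, i1} : Finset (Fin N)).card := Finset.card_le_card hss
      _ ≤ 2 := by
          refine le_trans (Finset.card_insert_le _ _) ?_
          simp
  have hm3 : m (P.p i3) ≤ 3 := by
    have hss : Finset.univ.filter (fun i => P.p i3 ∈ Sg i) ⊆ {i3, i2, i1} := by
      intro i hi
      have h := horder i3 i (Finset.mem_filter.mp hi).2
      have hlt := i.isLt
      simp only [Finset.mem_insert, Finset.mem_singleton]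
      simp only [hi3] at h
      rcases Nat.lt_or_ge (i : ℕ) (N - 2) with hc | hc
      · left; exact Fin.ext (show (i : ℕ) = N - 3 by omega)
      · rcases Nat.lt_or_ge (i : ℕ) (N - 1) with hc2 | hc2
        · right; left; exact Fin.ext (show (i : ℕ) = N - 2 by omega)
        · right; right; exact Fin.ext (show (i : ℕ) = N - 1 by omega)
    calc m (P.p i3) ≤ ({i3, i2, i1} : Finset (Fin N)).card := Finset.card_le_card hss
      _ ≤ 3 := by
          refine le_trans (Finset.card_insert_le _ _) ?_
          have : ({i2, i1} : Finset (Fin N)).card ≤ 2 := by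
            refine le_trans (Finset.card_insert_le _ _) ?_
            simp
          omega
  -- the three last crosses are distinct
  have hne12 : i1 ≠ i2 := by
    intro h
    have h' : N - 1 = N - 2 := congrArg Fin.val h
    omega
  have hne13 : i1 ≠ i3 := by
    intro h
    have h' : N - 1 = N - 3 := congrArg Fin.val h
    omega
  have hne23 : i2 ≠ i3 := by
    intro h
    have h' : N - 2 = N - 3 := congrArg Fin.val h
    omega
  have hab : P.p i1 ≠ P.p i2 := fun h => hne12 (hp_inj _ _ h)
  have hac : P.p i1 ≠ P.p i3 := fun h => hne13 (hp_inj _ _ h)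
  have hbc : P.p i2 ≠ P.p i3 := fun h => hne23 (hp_inj _ _ h)
  set T3 : Finset (ℤ × ℤ) := {P.p i1, P.p i2, P.p i3} with hT3
  have hT3U : T3 ⊆ U := by
    intro x hx
    simp only [hT3, Finset.mem_insert, Finset.mem_singleton] at hx
    rcases hx with rfl | rfl | rfl <;> exact hpU _
  have hT3card : T3.card = 3 := by
    rw [hT3, Finset.card_insert_of_notMem (by simp [hab, hac]),
      Finset.card_insert_of_notMem (by simp [hbc]), Finset.card_singleton]
  have hsplit : ∑ x ∈ U, m x = ∑ x ∈ T3, m x + ∑ x ∈ U \ T3, m x := by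
    rw [add_comm, Finset.sum_sdiff hT3U]
  have hsumT3 : ∑ x ∈ T3, m x ≤ 6 := by
    rw [hT3, Finset.sum_insert (by simp [hab, hac]),
      Finset.sum_insert (by simp [hbc]), Finset.sum_singleton]
    omega
  have hsumrest : ∑ x ∈ U \ T3, m x ≤ 4 * (U.card - 3) := by
    calc ∑ x ∈ U \ T3, m x ≤ ∑ _x ∈ U \ T3, 4 := Finset.sum_le_sum (fun x _ => hm4 x)
      _ = (U \ T3).card * 4 := Finset.sum_const _
      _ = 4 * (U.card - 3) := by
          rw [Finset.card_sdiff_of_subset hT3U, hT3card, mul_comm]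
  have hcardU : U.card ≤ 36 + N := by
    have h1 : U.card ≤ S0L.toFinset.card + (Finset.univ.image P.p).card :=
      Finset.card_union_le _ _
    have h2 : S0L.toFinset.card ≤ 36 := by
      have := S0L.toFinset_card_le
      exact le_trans this (by decide)
    have h3 : (Finset.univ.image P.p).card ≤ N := by
      refine le_trans Finset.card_image_le ?_
      simp
    omega
  have hUcard3 : 3 ≤ U.card := by
    have := Finset.card_le_card hT3U
    omega
  omega
end

section
/- For every play of Morpion Solitaire 5D of length N with N ≥ 3, the sum of the potentials (computed with respect to all N lines of the play) of the three crosses p_N, p_{N−1} and p_{N−2} drawn in the last three moves is at least 7, i.e., p(p_N) + p(p_{N−1}) + p(p_{N−2}) ≥ 7. -/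
/-- The number of lines of the play covering the point `C`. -/
noncomputable def coverCount {N : ℕ} (P : Play N) (C : ℤ × ℤ) : ℕ :=
  Nat.card {i : Fin N // C ∈ seg (P.q i) (P.d i)}

/-- The potential of a cross `C` after a play of length `N`:
`4` minus the number of lines of the play covering `C`. -/
noncomputable def pot {N : ℕ} (P : Play N) (C : ℤ × ℤ) : ℤ := 4 - coverCount P C

lemma dir_eq {d d' : ℤ × ℤ} (hd : d ∈ Dir) (hd' : d' ∈ Dir) {a b : ℤ}
    (h : a • d = b • d') (ha : a ≠ 0) : d = d' := by
  simp only [Dir, Set.mem_insert_iff, Set.mem_singleton_iff] at hd hd'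
  rcases hd with rfl | rfl | rfl | rfl <;> rcases hd' with rfl | rfl | rfl | rfl <;>
    simp_all [Prod.ext_iff, smul_eq_mul] <;> omega

lemma seg_dir_eq {q d q' d' : ℤ × ℤ} {x y : ℤ × ℤ} (hd : d ∈ Dir) (hd' : d' ∈ Dir)
    (hx : x ∈ seg q d) (hy : y ∈ seg q d) (hx' : x ∈ seg q' d') (hy' : y ∈ seg q' d')
    (hxy : x ≠ y) : d = d' := by
  obtain ⟨t, _, rfl⟩ := hx
  obtain ⟨s, _, hy⟩ := hy
  obtain ⟨t', _, hx'⟩ := hx'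
  obtain ⟨s', _, hy'⟩ := hy'
  have e1 : y - (q + (t : ℤ) • d) = ((s : ℤ) - (t : ℤ)) • d := by
    rw [hy, sub_smul]; abel
  have e2 : y - (q + (t : ℤ) • d) = ((s' : ℤ) - (t' : ℤ)) • d' := by
    rw [hy', hx', sub_smul]; abel
  refine dir_eq hd hd' (e1.symm.trans e2) ?_
  intro h0
  apply hxy
  have : (s : ℤ) = t := by omega
  rw [hy, this]

/-- If cross `p i` lies on line `j`, then `i ≤ j`. -/
lemma mem_le {N : ℕ} (P : Play N) (i j : Fin N)
    (h : P.p i ∈ seg (P.q j) (P.d j)) : i ≤ j := by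
  rcases P.seg_sub j h with h0 | ⟨k, hk, hpk⟩
  · exact absurd h0 (P.p_not_S0 i)
  · rcases lt_trichotomy k i with hlt | heq | hgt
    · exact absurd hpk (P.p_new i k hlt)
    · exact heq ▸ hk
    · exact absurd hpk.symm (P.p_new k i hgt)

lemma cover_eq {N : ℕ} (P : Play N) (C : ℤ × ℤ) :
    coverCount P C = Set.ncard {i : Fin N | C ∈ seg (P.q i) (P.d i)} :=
  Nat.card_coe_set_eq _


lemma last_three_aux {N : ℕ} (P : Play N) (a b c : Fin N)
    (hA : (a : ℕ) + 1 = N) (hB : (b : ℕ) + 2 = N) (hC : (c : ℕ) + 3 = N) :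
    7 ≤ pot P (P.p a) + pot P (P.p b) + pot P (P.p c) := by
  have keyA : ∀ j : Fin N, P.p a ∈ seg (P.q j) (P.d j) → j = a := by
    intro j h
    have h0 := mem_le P a j h
    have h1 := j.isLt
    rw [Fin.le_def] at h0
    exact Fin.ext (by omega)
  have keyB : ∀ j : Fin N, P.p b ∈ seg (P.q j) (P.d j) → j = b ∨ j = a := by
    intro j h
    have h0 := mem_le P b j h
    have h1 := j.isLt
    rw [Fin.le_def] at h0
    rcases Nat.lt_or_ge (j : ℕ) (N - 1) with h2 | h2
    · exact Or.inl (Fin.ext (by omega))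
    · exact Or.inr (Fin.ext (by omega))
  have keyC : ∀ j : Fin N, P.p c ∈ seg (P.q j) (P.d j) → j = c ∨ j = b ∨ j = a := by
    intro j h
    have h0 := mem_le P c j h
    have h1 := j.isLt
    rw [Fin.le_def] at h0
    rcases Nat.lt_or_ge (j : ℕ) (N - 2) with h2 | h2
    · exact Or.inl (Fin.ext (by omega))
    · rcases Nat.lt_or_ge (j : ℕ) (N - 1) with h3 | h3
      · exact Or.inr (Or.inl (Fin.ext (by omega)))
      · exact Or.inr (Or.inr (Fin.ext (by omega)))
  have hba : b < a := by rw [Fin.lt_def]; omega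
  have hcb : c < b := by rw [Fin.lt_def]; omega
  -- the key exclusion
  have key : ¬ (P.p b ∈ seg (P.q a) (P.d a) ∧ P.p c ∈ seg (P.q a) (P.d a) ∧
      P.p c ∈ seg (P.q b) (P.d b)) := by
    rintro ⟨h1, h2, h3⟩
    have hbc : P.p c ≠ P.p b := P.p_new b c hcb
    have hd : P.d a = P.d b :=
      seg_dir_eq (P.d_mem a) (P.d_mem b) h1 h2 (P.p_mem b) h3 (fun h => hbc h.symm)
    have hdisj := P.disj a b hba hd.symm
    have : P.p b ∈ seg (P.q a) (P.d a) ∩ seg (P.q b) (P.d b) := ⟨h1, P.p_mem b⟩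
    rw [hdisj] at this
    exact this
  -- cardinality bounds
  have bndA : coverCount P (P.p a) ≤ 1 := by
    rw [cover_eq]
    calc Set.ncard {i : Fin N | P.p a ∈ seg (P.q i) (P.d i)}
        ≤ Set.ncard ({a} : Set (Fin N)) :=
          Set.ncard_le_ncard (fun j hj => keyA j hj) (Set.toFinite _)
      _ = 1 := Set.ncard_singleton a
  have pair_le : ∀ x y : Fin N, Set.ncard ({x, y} : Set (Fin N)) ≤ 2 := by
    intro x y
    calc Set.ncard (insert x ({y} : Set (Fin N))) ≤ Set.ncard ({y} : Set (Fin N)) + 1 :=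
          Set.ncard_insert_le _ _
      _ = 2 := by rw [Set.ncard_singleton]
  have sum_le : coverCount P (P.p b) + coverCount P (P.p c) ≤ 4 := by
    by_cases h1 : P.p b ∈ seg (P.q a) (P.d a)
    · have bndB : coverCount P (P.p b) ≤ 2 := by
        rw [cover_eq]
        calc Set.ncard {i : Fin N | P.p b ∈ seg (P.q i) (P.d i)}
            ≤ Set.ncard ({b, a} : Set (Fin N)) :=
              Set.ncard_le_ncard (fun j hj => keyB j hj) (Set.toFinite _)
          _ ≤ 2 := pair_le b a
      by_cases h2 : P.p c ∈ seg (P.q a) (P.d a)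
      · have h3 : P.p c ∉ seg (P.q b) (P.d b) := fun h3 => key ⟨h1, h2, h3⟩
        have bndC' : coverCount P (P.p c) ≤ 2 := by
          rw [cover_eq]
          calc Set.ncard {i : Fin N | P.p c ∈ seg (P.q i) (P.d i)}
              ≤ Set.ncard ({c, a} : Set (Fin N)) := by
                refine Set.ncard_le_ncard (fun j hj => ?_) (Set.toFinite _)
                rcases keyC j hj with rfl | rfl | rfl
                · exact Set.mem_insert _ _
                · exact absurd hj h3
                · exact Set.mem_insert_of_mem _ rfl
            _ ≤ 2 := pair_le c a
        omega
      · have bndC' : coverCount P (P.p c) ≤ 2 := by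
          rw [cover_eq]
          calc Set.ncard {i : Fin N | P.p c ∈ seg (P.q i) (P.d i)}
              ≤ Set.ncard ({c, b} : Set (Fin N)) := by
                refine Set.ncard_le_ncard (fun j hj => ?_) (Set.toFinite _)
                rcases keyC j hj with rfl | rfl | rfl
                · exact Set.mem_insert _ _
                · exact Set.mem_insert_of_mem _ rfl
                · exact absurd hj h2
            _ ≤ 2 := pair_le c b
        omega
    · have bndB' : coverCount P (P.p b) ≤ 1 := by
        rw [cover_eq]
        calc Set.ncard {i : Fin N | P.p b ∈ seg (P.q i) (P.d i)}
            ≤ Set.ncard ({b} : Set (Fin N)) := by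
              refine Set.ncard_le_ncard (fun j hj => ?_) (Set.toFinite _)
              rcases keyB j hj with rfl | rfl
              · rfl
              · exact absurd hj h1
          _ = 1 := Set.ncard_singleton b
      have bndC : coverCount P (P.p c) ≤ 3 := by
        rw [cover_eq]
        calc Set.ncard {i : Fin N | P.p c ∈ seg (P.q i) (P.d i)}
            ≤ Set.ncard ({c, b, a} : Set (Fin N)) :=
              Set.ncard_le_ncard (fun j hj => keyC j hj) (Set.toFinite _)
          _ ≤ 3 := le_trans (Set.ncard_insert_le _ _) (by have := pair_le b a; omega)
      omega
  simp only [pot]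
  omega


/-- The sum of the potentials of the crosses drawn in the last three moves
of a play of Morpion Solitaire 5D is at least 7. -/
theorem last_three_potentials (N : ℕ) (hN : 3 ≤ N) (P : Play N) :
    7 ≤ pot P (P.p ⟨N - 1, by omega⟩) + pot P (P.p ⟨N - 2, by omega⟩) +
        pot P (P.p ⟨N - 3, by omega⟩) := by
  exact last_three_aux P _ _ _ (by simp; omega) (by simp; omega) (by simp; omega)
end

section
/- For every play of Morpion Solitaire 5D of length N, the total potential of the board after move N equals exactly 144 − N. In particular, the total potential of the initial board (N = 0) is 144, and the total potential decreases by exactly 1 with every move. -/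
/-- The set of crosses on the board after the first `n` moves of a play. -/
def crossesUpTo {N : ℕ} (P : Play N) (n : ℕ) : Set (ℤ × ℤ) :=
  S0 ∪ {x | ∃ i : Fin N, (i : ℕ) < n ∧ P.p i = x}

/-- The potential of a cross `C` after the first `n` moves of a play:
`4` minus the number of the first `n` lines that cover `C`. -/
noncomputable def potUpTo {N : ℕ} (P : Play N) (n : ℕ) (C : ℤ × ℤ) : ℤ :=
  4 - (Nat.card {i : Fin N // (i : ℕ) < n ∧ C ∈ seg (P.q i) (P.d i)} : ℤ)

/-- The total potential of the board after the first `n` moves of a play: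
the sum of the potentials of all crosses on the board. -/
noncomputable def totalPotUpTo {N : ℕ} (P : Play N) (n : ℕ) : ℤ :=
  ∑ᶠ C ∈ crossesUpTo P n, potUpTo P n C

open Finset

noncomputable def S0fin : Finset (ℤ × ℤ) :=
  (Finset.Icc ((0:ℤ),(0:ℤ)) (9,9)).filter (fun p =>
    ((p.2 = 0 ∨ p.2 = 9) ∧ 3 ≤ p.1 ∧ p.1 ≤ 6) ∨
    ((p.1 = 0 ∨ p.1 = 9) ∧ 3 ≤ p.2 ∧ p.2 ≤ 6) ∨
    ((p.1 = 3 ∨ p.1 = 6) ∧ ((0 ≤ p.2 ∧ p.2 ≤ 3) ∨ (6 ≤ p.2 ∧ p.2 ≤ 9))) ∨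
    ((p.2 = 3 ∨ p.2 = 6) ∧ ((0 ≤ p.1 ∧ p.1 ≤ 3) ∨ (6 ≤ p.1 ∧ p.1 ≤ 9))))

lemma S0fin_coe : (S0fin : Set (ℤ × ℤ)) = S0 := by
  ext ⟨x, y⟩
  simp only [Finset.coe_filter, S0fin, Finset.mem_Icc, Prod.le_def, Set.mem_setOf_eq, S0]
  omega

lemma S0fin_card : S0fin.card = 36 := by decide

lemma mem_S0fin {x : ℤ × ℤ} : x ∈ S0fin ↔ x ∈ S0 := by
  rw [← S0fin_coe]; exact Iff.rfl

noncomputable def segFin (q d : ℤ × ℤ) : Finset (ℤ × ℤ) :=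
  (Finset.range 5).image (fun t : ℕ => q + (t : ℤ) • d)

lemma mem_segFin {x q d : ℤ × ℤ} : x ∈ segFin q d ↔ x ∈ seg q d := by
  simp only [segFin, mem_image, mem_range, seg, Set.mem_setOf_eq]
  constructor
  · rintro ⟨t, ht, rfl⟩; exact ⟨t, by omega, rfl⟩
  · rintro ⟨t, ht, rfl⟩; exact ⟨t, by omega, rfl⟩

lemma segFin_card {q d : ℤ × ℤ} (hd : d ∈ Dir) : (segFin q d).card = 5 := by
  rw [segFin, Finset.card_image_of_injOn, Finset.card_range]
  intro s hs t ht h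
  simp only [mem_coe, mem_range] at hs ht
  have h1 := congrArg Prod.fst h
  have h2 := congrArg Prod.snd h
  simp only [Prod.fst_add, Prod.snd_add, Prod.smul_fst, Prod.smul_snd, smul_eq_mul,
    add_right_inj] at h1 h2
  rcases hd with h' | h' | h' | h' <;>
    · rw [show d = _ from h'] at h1 h2
      simp at h1 h2
      omega

open Classical in
noncomputable def Ffin {N : ℕ} (P : Play N) (n : ℕ) : Finset (ℤ × ℤ) :=
  S0fin ∪ (Finset.univ.filter (fun i : Fin N => (i : ℕ) < n)).image P.p

lemma mem_Ffin {N : ℕ} (P : Play N) (n : ℕ) {x : ℤ × ℤ} :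
    x ∈ Ffin P n ↔ x ∈ crossesUpTo P n := by
  classical
  simp [Ffin, crossesUpTo, mem_S0fin, eq_comm]

lemma Ffin_coe {N : ℕ} (P : Play N) (n : ℕ) : (Ffin P n : Set (ℤ × ℤ)) = crossesUpTo P n := by
  ext x; rw [mem_coe, mem_Ffin]

lemma totalPot_eq_sum {N : ℕ} (P : Play N) (n : ℕ) :
    totalPotUpTo P n = ∑ C ∈ Ffin P n, potUpTo P n C := by
  rw [totalPotUpTo, ← Ffin_coe, finsum_mem_coe_finset]

open Classical in
lemma count_eq {N : ℕ} (P : Play N) (n : ℕ) (C : ℤ × ℤ) :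
    (Nat.card {i : Fin N // (i : ℕ) < n ∧ C ∈ seg (P.q i) (P.d i)}) =
      (Finset.univ.filter (fun i : Fin N => (i : ℕ) < n ∧ C ∈ seg (P.q i) (P.d i))).card := by
  rw [Nat.card_eq_fintype_card, Fintype.card_subtype]

lemma pot_zero {N : ℕ} (P : Play N) (C : ℤ × ℤ) : potUpTo P 0 C = 4 := by
  classical
  rw [potUpTo, count_eq]
  simp

lemma totalPot_zero {N : ℕ} (P : Play N) : totalPotUpTo P 0 = 144 := by
  classical
  rw [totalPot_eq_sum]
  have h0 : Ffin P 0 = S0fin := by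
    ext x
    simp [Ffin]
  rw [h0]
  simp only [pot_zero]
  rw [Finset.sum_const, S0fin_card]
  norm_num

section Step

variable {N : ℕ} (P : Play N) (n : ℕ)

lemma mem_cross_succ (hn : n < N) {x : ℤ × ℤ} :
    x ∈ crossesUpTo P (n+1) ↔ x = P.p ⟨n, hn⟩ ∨ x ∈ crossesUpTo P n := by
  simp only [crossesUpTo, Set.mem_union, Set.mem_setOf_eq]
  constructor
  · rintro (h | ⟨j, hj, rfl⟩)
    · exact Or.inr (Or.inl h)
    · rcases Nat.lt_succ_iff_lt_or_eq.mp hj with h | h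
      · exact Or.inr (Or.inr ⟨j, h, rfl⟩)
      · exact Or.inl (by rw [show j = ⟨n, hn⟩ from Fin.ext h])
  · rintro (rfl | h | ⟨j, hj, rfl⟩)
    · exact Or.inr ⟨⟨n, hn⟩, Nat.lt_succ_self n, rfl⟩
    · exact Or.inl h
    · exact Or.inr ⟨j, Nat.lt_succ_of_lt hj, rfl⟩

lemma pi_not_mem (hn : n < N) : P.p ⟨n, hn⟩ ∉ Ffin P n := by
  rw [mem_Ffin]
  rintro (h | ⟨j, hj, hpj⟩)
  · exact P.p_not_S0 _ h
  · exact P.p_new ⟨n, hn⟩ j (by exact hj) hpj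

lemma Ffin_succ (hn : n < N) : Ffin P (n+1) = insert (P.p ⟨n, hn⟩) (Ffin P n) := by
  ext x
  rw [mem_Ffin, Finset.mem_insert, mem_Ffin, mem_cross_succ P n hn]

open Classical in
lemma pot_succ (hn : n < N) (C : ℤ × ℤ) :
    potUpTo P (n+1) C =
      potUpTo P n C - (if C ∈ seg (P.q ⟨n, hn⟩) (P.d ⟨n, hn⟩) then 1 else 0) := by
  have key : (univ.filter (fun j : Fin N => (j : ℕ) < n + 1 ∧ C ∈ seg (P.q j) (P.d j))).card
      = (univ.filter (fun j : Fin N => (j : ℕ) < n ∧ C ∈ seg (P.q j) (P.d j))).card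
        + if C ∈ seg (P.q ⟨n, hn⟩) (P.d ⟨n, hn⟩) then 1 else 0 := by
    by_cases hQ : C ∈ seg (P.q ⟨n, hn⟩) (P.d ⟨n, hn⟩)
    · rw [if_pos hQ]
      have he : univ.filter (fun j : Fin N => (j : ℕ) < n + 1 ∧ C ∈ seg (P.q j) (P.d j))
          = insert ⟨n, hn⟩ (univ.filter (fun j : Fin N => (j : ℕ) < n ∧ C ∈ seg (P.q j) (P.d j))) := by
        ext j
        simp only [mem_filter, mem_univ, true_and, mem_insert]
        constructor
        · rintro ⟨hj, hq⟩
          rcases Nat.lt_succ_iff_lt_or_eq.mp hj with h | h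
          · exact Or.inr ⟨h, hq⟩
          · exact Or.inl (Fin.ext h)
        · rintro (rfl | ⟨hj, hq⟩)
          · exact ⟨Nat.lt_succ_self n, hQ⟩
          · exact ⟨Nat.lt_succ_of_lt hj, hq⟩
      rw [he, card_insert_of_notMem (by simp)]
    · rw [if_neg hQ, Nat.add_zero]
      have he : univ.filter (fun j : Fin N => (j : ℕ) < n + 1 ∧ C ∈ seg (P.q j) (P.d j))
          = univ.filter (fun j : Fin N => (j : ℕ) < n ∧ C ∈ seg (P.q j) (P.d j)) := by
        ext j
        simp only [mem_filter, mem_univ, true_and]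
        constructor
        · rintro ⟨hj, hq⟩
          rcases Nat.lt_succ_iff_lt_or_eq.mp hj with h | h
          · exact ⟨h, hq⟩
          · exact absurd hq (by rw [show j = ⟨n, hn⟩ from Fin.ext h]; exact hQ)
        · rintro ⟨hj, hq⟩
          exact ⟨Nat.lt_succ_of_lt hj, hq⟩
      rw [he]
      omega
  rw [potUpTo, potUpTo, count_eq, count_eq, key]
  push_cast
  by_cases hQ : C ∈ seg (P.q ⟨n, hn⟩) (P.d ⟨n, hn⟩) <;> simp [hQ] <;> ring

open Classical in
lemma pot_pi (hn : n < N) : potUpTo P (n+1) (P.p ⟨n, hn⟩) = 3 := by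
  have key : (univ.filter (fun j : Fin N =>
      (j : ℕ) < n + 1 ∧ P.p ⟨n, hn⟩ ∈ seg (P.q j) (P.d j))) = {⟨n, hn⟩} := by
    ext j
    simp only [mem_filter, mem_univ, true_and, mem_singleton]
    constructor
    · rintro ⟨hj, hq⟩
      rcases Nat.lt_succ_iff_lt_or_eq.mp hj with h | h
      · exfalso
        rcases P.seg_sub j hq with hS | ⟨k, hk, hpk⟩
        · exact P.p_not_S0 _ hS
        · have hki : k < (⟨n, hn⟩ : Fin N) := lt_of_le_of_lt hk (by exact h)
          exact P.p_new ⟨n, hn⟩ k hki hpk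
      · exact Fin.ext h
    · rintro rfl
      exact ⟨Nat.lt_succ_self n, P.p_mem _⟩
  rw [potUpTo, count_eq, key]
  simp

open Classical in
lemma seg_filter_card (hn : n < N) :
    ((Ffin P n).filter (fun x => x ∈ seg (P.q ⟨n, hn⟩) (P.d ⟨n, hn⟩))).card = 4 := by
  have he : (Ffin P n).filter (fun x => x ∈ seg (P.q ⟨n, hn⟩) (P.d ⟨n, hn⟩))
      = (segFin (P.q ⟨n, hn⟩) (P.d ⟨n, hn⟩)).erase (P.p ⟨n, hn⟩) := by
    ext x
    simp only [mem_filter, mem_erase, mem_segFin]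
    constructor
    · rintro ⟨hx, hs⟩
      exact ⟨fun h => pi_not_mem P n hn (h ▸ hx), hs⟩
    · rintro ⟨hne, hs⟩
      refine ⟨?_, hs⟩
      rcases P.seg_sub ⟨n, hn⟩ hs with hS | ⟨k, hk, hpk⟩
      · rw [mem_Ffin]; exact Or.inl hS
      · rcases lt_or_eq_of_le hk with hlt | rfl
        · rw [mem_Ffin]; exact Or.inr ⟨k, by exact hlt, hpk⟩
        · exact absurd hpk (Ne.symm hne)
  rw [he, card_erase_of_mem (mem_segFin.mpr (P.p_mem _)), segFin_card (P.d_mem _)]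

open Classical in
lemma totalPot_succ (hn : n < N) : totalPotUpTo P (n+1) = totalPotUpTo P n - 1 := by
  rw [totalPot_eq_sum, totalPot_eq_sum, Ffin_succ P n hn,
    Finset.sum_insert (pi_not_mem P n hn), pot_pi P n hn]
  have h2 : ∀ C ∈ Ffin P n, potUpTo P (n+1) C =
      potUpTo P n C - (if C ∈ seg (P.q ⟨n, hn⟩) (P.d ⟨n, hn⟩) then 1 else 0) :=
    fun C _ => pot_succ P n hn C
  rw [Finset.sum_congr rfl h2, Finset.sum_sub_distrib, Finset.sum_boole,
    seg_filter_card P n hn]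
  push_cast
  ring

end Step

/-- The total potential of the board after a play of length `N` is exactly
`144 - N`; moreover, after any first `n ≤ N` moves of the play the total
potential is exactly `144 - n` (in particular it is `144` initially and
decreases by exactly `1` with every move). -/
theorem total_potential_eq (N : ℕ) (P : Play N) :
    totalPotUpTo P N = 144 - (N : ℤ) ∧
    ∀ n : ℕ, n ≤ N → totalPotUpTo P n = 144 - (n : ℤ) := by
  have main : ∀ n : ℕ, n ≤ N → totalPotUpTo P n = 144 - (n : ℤ) := by
    intro n hn
    induction n with
    | zero => simpa using totalPot_zero P
    | succ m ih =>
      rw [totalPot_succ P m (by omega), ih (by omega)]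
      push_cast
      ring
  exact ⟨main N le_rfl, main⟩
end

section
/- For every play of Morpion Solitaire 5D of length N + 1, the total potential of the board after the first N moves (i.e., computed from the crosses S₀ ∪ {p₁,…,p_N} and the lines L₁,…,L_N only) is at least 4. In other words, playing a further move requires a total potential of at least 4. -/
def D4 : Finset (ℤ × ℤ) := {(1,0),(0,1),(1,1),(1,-1)}

lemma mem_D4 {N : ℕ} (P : Play N) (i : Fin N) : P.d i ∈ D4 := by
  have h := P.d_mem i
  simp only [Dir, Set.mem_insert_iff, Set.mem_singleton_iff] at h
  simp only [D4, Finset.mem_insert, Finset.mem_singleton]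
  tauto

lemma smul_inj {d : ℤ × ℤ} (hd : d ∈ Dir) {s t : ℤ} (h : s • d = t • d) : s = t := by
  simp only [Dir, Set.mem_insert_iff, Set.mem_singleton_iff] at hd
  rcases hd with h1 | h1 | h1 | h1 <;> subst h1 <;>
    simp only [Prod.smul_mk, smul_eq_mul, Prod.mk.injEq] at h <;> omega

lemma card_lines_le {N : ℕ} (P : Play N) (n : ℕ) (C : ℤ × ℤ) (E : Finset (ℤ × ℤ))
    (hE : ∀ i : Fin N, (i : ℕ) < n → C ∈ seg (P.q i) (P.d i) → P.d i ∈ E) :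
    Nat.card {i : Fin N // (i : ℕ) < n ∧ C ∈ seg (P.q i) (P.d i)} ≤ E.card := by
  have key : Function.Injective
      (fun i : {i : Fin N // (i : ℕ) < n ∧ C ∈ seg (P.q i) (P.d i)} =>
        (⟨P.d i.1, hE i.1 i.2.1 i.2.2⟩ : {x // x ∈ E})) := by
    rintro ⟨i, hi1, hi2⟩ ⟨j, hj1, hj2⟩ h
    simp only [Subtype.mk.injEq] at h ⊢
    by_contra hne
    rcases lt_or_gt_of_ne hne with hlt | hlt
    · have := P.disj j i hlt h
      have : C ∈ seg (P.q j) (P.d j) ∩ seg (P.q i) (P.d i) := ⟨hj2, hi2⟩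
      rw [P.disj j i hlt h] at this
      exact this
    · have : C ∈ seg (P.q i) (P.d i) ∩ seg (P.q j) (P.d j) := ⟨hi2, hj2⟩
      rw [P.disj i j hlt h.symm] at this
      exact this
  calc Nat.card {i : Fin N // (i : ℕ) < n ∧ C ∈ seg (P.q i) (P.d i)}
      ≤ Nat.card {x // x ∈ E} := Nat.card_le_card_of_injective _ key
    _ = E.card := by rw [Nat.card_eq_fintype_card, Fintype.card_coe]

lemma D4_card : D4.card = 4 := by decide

lemma pot_nonneg {N : ℕ} (P : Play N) (n : ℕ) (C : ℤ × ℤ) : 0 ≤ potUpTo P n C := by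
  have h := card_lines_le P n C D4 (fun i _ _ => mem_D4 P i)
  rw [D4_card] at h
  unfold potUpTo
  omega

lemma S0_finite : S0.Finite := by
  apply Set.Finite.subset ((Set.finite_Icc (0:ℤ) 9).prod (Set.finite_Icc (0:ℤ) 9))
  rintro ⟨x, y⟩ h
  simp only [S0, Set.mem_setOf_eq] at h
  simp only [Set.mem_prod, Set.mem_Icc]
  omega

lemma crosses_finite {N : ℕ} (P : Play N) (n : ℕ) : (crossesUpTo P n).Finite := by
  apply Set.Finite.union S0_finite
  apply Set.Finite.subset (Set.finite_range P.p)
  rintro x ⟨i, _, h⟩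
  exact ⟨i, h⟩

/-- If one more move can be played (i.e. the play has length `N + 1`), then the
total potential of the board after the first `N` moves is at least `4`. -/
theorem next_move_needs_potential_four (N : ℕ) (P : Play (N + 1)) :
    4 ≤ totalPotUpTo P N := by
  set i₀ : Fin (N + 1) := ⟨N, Nat.lt_succ_self N⟩ with hi₀
  obtain ⟨t₀, ht₀le, ht₀⟩ := P.p_mem i₀
  have hdD : P.d i₀ ∈ Dir := P.d_mem i₀
  -- injectivity of t ↦ q + t • d
  have hinj : ∀ s t : ℕ,
      P.q i₀ + (s : ℤ) • P.d i₀ = P.q i₀ + (t : ℤ) • P.d i₀ → s = t := by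
    intro s t h
    have := smul_inj hdD (add_left_cancel h)
    exact_mod_cast this
  set T : Finset (ℤ × ℤ) :=
    (({0,1,2,3,4} : Finset ℕ).erase t₀).image
      (fun t : ℕ => P.q i₀ + (t : ℤ) • P.d i₀) with hT
  have ht₀mem : t₀ ∈ ({0,1,2,3,4} : Finset ℕ) := by
    simp only [Finset.mem_insert, Finset.mem_singleton]; omega
  have hTcard : T.card = 4 := by
    rw [hT, Finset.card_image_of_injOn (fun a _ b _ h => hinj a b h),
      Finset.card_erase_of_mem ht₀mem]
    decide
  -- every element of T is on the last line
  have hTseg : ∀ C ∈ T, C ∈ seg (P.q i₀) (P.d i₀) := by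
    intro C hC
    rw [hT, Finset.mem_image] at hC
    obtain ⟨t, ht, rfl⟩ := hC
    have := Finset.mem_of_mem_erase ht
    simp only [Finset.mem_insert, Finset.mem_singleton] at this
    exact ⟨t, by omega, rfl⟩
  -- every element of T differs from p i₀
  have hTne : ∀ C ∈ T, C ≠ P.p i₀ := by
    intro C hC he
    rw [hT, Finset.mem_image] at hC
    obtain ⟨t, ht, rfl⟩ := hC
    rw [ht₀] at he
    exact (Finset.ne_of_mem_erase ht) (hinj t t₀ he)
  -- T is on the board after N moves
  have hTsub : ∀ C ∈ T, C ∈ crossesUpTo P N := by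
    intro C hC
    rcases P.seg_sub i₀ (hTseg C hC) with h | ⟨j, hj, hpj⟩
    · exact Or.inl h
    · refine Or.inr ⟨j, ?_, hpj⟩
      rcases lt_or_eq_of_le hj with hlt | heq
      · exact hlt
      · exact absurd (heq ▸ hpj : P.p i₀ = C).symm (hTne C hC)
  -- potential of elements of T is at least 1
  have hTpot : ∀ C ∈ T, 1 ≤ potUpTo P N C := by
    intro C hC
    have hE : ∀ i : Fin (N + 1), (i : ℕ) < N → C ∈ seg (P.q i) (P.d i) →
        P.d i ∈ D4.erase (P.d i₀) := by
      intro i hi hCi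
      refine Finset.mem_erase.2 ⟨?_, mem_D4 P i⟩
      intro hd
      have hlt : i < i₀ := by
        rw [Fin.lt_def]; exact hi
      have hcap := P.disj i₀ i hlt hd
      have : C ∈ seg (P.q i₀) (P.d i₀) ∩ seg (P.q i) (P.d i) := ⟨hTseg C hC, hCi⟩
      rw [hcap] at this
      exact this
    have h := card_lines_le P N C (D4.erase (P.d i₀)) hE
    rw [Finset.card_erase_of_mem (mem_D4 P i₀), D4_card] at h
    unfold potUpTo
    omega
  have hfin := crosses_finite P N
  have hTF : T ⊆ hfin.toFinset := by
    intro C hC; rw [Set.Finite.mem_toFinset]; exact hTsub C hC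
  have : totalPotUpTo P N = ∑ C ∈ hfin.toFinset, potUpTo P N C :=
    finsum_mem_eq_finite_toFinset_sum _ hfin
  rw [this]
  calc (4 : ℤ) = ∑ _C ∈ T, (1 : ℤ) := by rw [Finset.sum_const, hTcard]; ring
    _ ≤ ∑ C ∈ T, potUpTo P N C := Finset.sum_le_sum hTpot
    _ ≤ ∑ C ∈ hfin.toFinset, potUpTo P N C :=
        Finset.sum_le_sum_of_subset_of_nonneg hTF (fun C _ _ => pot_nonneg P N C)
end

section
/- Let N be a positive integer with N ≢ 1 (mod 4) and ⌈N/4⌉ ≡ 2 or 3 (mod 5). Then every 5D-layout of N lines covers at least ⌈N/4⌉ · 5 + 5 lattice points. -/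
/-- A 5D-layout of `N` lines: `N` pairwise distinct lines, each in a direction
from `Dir`, such that two distinct lines in the same direction are disjoint. -/
structure Layout (N : ℕ) where
  q : Fin N → ℤ × ℤ
  d : Fin N → ℤ × ℤ
  d_mem : ∀ i, d i ∈ Dir
  distinct : ∀ i j : Fin N, i ≠ j → seg (q i) (d i) ≠ seg (q j) (d j)
  disj : ∀ i j : Fin N, i ≠ j → d i = d j → seg (q i) (d i) ∩ seg (q j) (d j) = ∅

/-- The set of lattice points covered by the lines of a layout. -/
def Layout.covered {N : ℕ} (L : Layout N) : Set (ℤ × ℤ) := ⋃ i, seg (L.q i) (L.d i)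

namespace MS

def dirOf : Fin 4 → ℤ × ℤ
  | 0 => (1, 0) | 1 => (0, 1) | 2 => (1, 1) | 3 => (1, -1)

/-- cell of a lattice point -/
def cl (p : ℤ × ℤ) : ZMod 5 × ZMod 5 := ((p.1 : ZMod 5), (p.2 : ZMod 5))

/-- the functional whose fibers contain the lines of direction `dirOf t` -/
def lam : Fin 4 → ZMod 5 × ZMod 5 → ZMod 5
  | 0, z => -z.2 | 1, z => z.1 | 2, z => z.1 - z.2 | 3, z => -z.1 - z.2

def pd : Fin 4 → ZMod 5 × ZMod 5
  | 0 => (1, 0) | 1 => (0, 1) | 2 => (1, 1) | 3 => (1, -1)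

def stepOf : Fin 4 → (ZMod 5 × ZMod 5) → (ZMod 5 × ZMod 5) → ZMod 5
  | 0, w, z => z.1 - w.1
  | 1, w, z => z.2 - w.2
  | 2, w, z => z.1 - w.1
  | 3, w, z => z.1 - w.1

lemma cl_dirOf : ∀ t : Fin 4, cl (dirOf t) = pd t := by decide

lemma hit : ∀ (t : Fin 4) (w z : ZMod 5 × ZMod 5), lam t w = lam t z →
    (w.1 + stepOf t w z * (pd t).1, w.2 + stepOf t w z * (pd t).2) = z := by decide

lemma fiber_card : ∀ (t : Fin 4) (c : ZMod 5),
    (Finset.univ.filter fun z => lam t z = c).card = 5 := by decide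

lemma pair_inj : ∀ t t' : Fin 4, t ≠ t' → ∀ z z' : ZMod 5 × ZMod 5,
    lam t z = lam t z' → lam t' z = lam t' z' → z = z' := by decide

lemma pair_image : ∀ t t' : Fin 4, t ≠ t' → ∀ j : ZMod 5,
    ((Finset.univ.filter fun z => lam t' z = j).image (lam t)) = Finset.univ := by decide

lemma cl_add_smul (q d : ℤ × ℤ) (n : ℕ) :
    cl (q + (n : ℤ) • d) = ((cl q).1 + (n : ZMod 5) * (cl d).1, (cl q).2 + (n : ZMod 5) * (cl d).2) := by
  unfold cl
  simp only [Prod.ext_iff, Prod.smul_def, Prod.fst_add, Prod.snd_add, Prod.fst_mul, Prod.snd_mul, smul_eq_mul]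
  constructor <;> push_cast <;> ring

end MS

/-- If `N ≢ 1 (mod 4)` and `⌈N/4⌉ ≡ 2` or `3 (mod 5)`, then every 5D-layout of
`N` lines covers at least `⌈N/4⌉ · 5 + 5` lattice points.
(Here `(N + 3) / 4` is the ceiling `⌈N/4⌉` in natural-number arithmetic.) -/
theorem layout_covers_ceil_plus_five (N : ℕ) (hpos : 0 < N) (h4 : N % 4 ≠ 1)
    (h5 : ((N + 3) / 4) % 5 = 2 ∨ ((N + 3) / 4) % 5 = 3) (L : Layout N) :
    ((N + 3) / 4) * 5 + 5 ≤ L.covered.ncard := by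
  classical
  set k := (N + 3) / 4 with hk
  by_contra hcon
  push_neg at hcon
  -- finiteness
  have hsegfin : ∀ (q d : ℤ × ℤ), (seg q d).Finite := by
    intro q d
    have hsub : seg q d ⊆ (fun n : Fin 5 => q + ((n : ℕ) : ℤ) • d) '' Set.univ := by
      rintro p ⟨t, ht, rfl⟩
      exact ⟨⟨t, by omega⟩, trivial, rfl⟩
    exact Set.Finite.subset (Set.toFinite _) hsub
  have hXfin : L.covered.Finite := Set.finite_iUnion (fun i => hsegfin _ _)
  have hm_eq : L.covered.ncard = hXfin.toFinset.card := Set.ncard_eq_toFinset_card _ hXfin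
  set XF : Finset (ℤ × ℤ) := hXfin.toFinset with hXF
  set m := XF.card with hmdef
  have hm : m ≤ k * 5 + 4 := by omega
  -- direction index
  have hg : ∀ i : Fin N, ∃ t : Fin 4, L.d i = MS.dirOf t := by
    intro i
    have h := L.d_mem i
    simp only [Dir, Set.mem_insert_iff, Set.mem_singleton_iff] at h
    rcases h with h|h|h|h
    exacts [⟨0, h⟩, ⟨1, h⟩, ⟨2, h⟩, ⟨3, h⟩]
  set gi : Fin N → Fin 4 := fun i => (hg i).choose with hgi
  have hgid : ∀ i, L.d i = MS.dirOf (gi i) := fun i => (hg i).choose_spec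
  set K : Fin N → Fin 4 × ZMod 5 := fun i => (gi i, MS.lam (gi i) (MS.cl (L.q i))) with hK
  set a : Fin 4 × ZMod 5 → ℕ := fun tc => (Finset.univ.filter fun i => K i = tc).card with ha
  set R : ZMod 5 × ZMod 5 → ℕ := fun z => (XF.filter fun p => MS.cl p = z).card with hR
  -- total of R is m
  have hsumR : ∑ z : ZMod 5 × ZMod 5, R z = m :=
    (Finset.card_eq_sum_card_fiberwise (fun x _ => Finset.mem_univ (MS.cl x))).symm
  -- total of a is N
  have hsumA : ∑ tc : Fin 4 × ZMod 5, a tc = N := by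
    have h := Finset.card_eq_sum_card_fiberwise
      (s := (Finset.univ : Finset (Fin N))) (f := K) (t := Finset.univ)
      (fun x _ => Finset.mem_univ _)
    simpa [ha] using h.symm
  -- key counting bound: each line of direction t, intercept c, hits every cell z
  -- of the fiber {lam t = c}, and distinct such lines hit it in distinct points
  have key : ∀ (t : Fin 4) (c : ZMod 5) (z : ZMod 5 × ZMod 5), MS.lam t z = c →
      a (t, c) ≤ R z := by
    intro t c z hz
    simp only [ha, hR]
    set pt : Fin N → ℤ × ℤ :=
      fun i => L.q i + ((MS.stepOf t (MS.cl (L.q i)) z).val : ℤ) • MS.dirOf t with hpt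
    have hcl : ∀ i : Fin N, K i = (t, c) → MS.cl (pt i) = z := by
      intro i hi
      have h1 : gi i = t := congrArg Prod.fst hi
      have h2 : MS.lam (gi i) (MS.cl (L.q i)) = c := congrArg Prod.snd hi
      rw [h1] at h2
      have hlam : MS.lam t (MS.cl (L.q i)) = MS.lam t z := by rw [h2, hz]
      have hh := MS.hit t (MS.cl (L.q i)) z hlam
      show MS.cl (L.q i + ((MS.stepOf t (MS.cl (L.q i)) z).val : ℤ) • MS.dirOf t) = z
      rw [MS.cl_add_smul, MS.cl_dirOf, ZMod.natCast_rightInverse _]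
      exact hh
    have hmem : ∀ i : Fin N, K i = (t, c) → pt i ∈ seg (L.q i) (L.d i) := by
      intro i hi
      have h1 : gi i = t := congrArg Prod.fst hi
      refine ⟨(MS.stepOf t (MS.cl (L.q i)) z).val, ?_, ?_⟩
      · have := ZMod.val_lt (MS.stepOf t (MS.cl (L.q i)) z)
        omega
      · rw [hgid i, h1]
    apply Finset.card_le_card_of_injOn pt
    · intro i hi
      simp only [Finset.mem_coe, Finset.mem_filter, Finset.mem_univ, true_and] at hi ⊢
      refine ⟨?_, hcl i hi⟩
      rw [hXF, Set.Finite.mem_toFinset]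
      exact Set.mem_iUnion.mpr ⟨i, hmem i hi⟩
    · intro i hi j hj hij
      simp only [Finset.coe_filter, Set.mem_setOf_eq, Finset.mem_univ, true_and] at hi hj
      by_contra hne
      have h1i : gi i = t := congrArg Prod.fst hi
      have h1j : gi j = t := congrArg Prod.fst hj
      have hdi : L.d i = MS.dirOf t := by rw [hgid i, h1i]
      have hdj : L.d j = MS.dirOf t := by rw [hgid j, h1j]
      have hdisj := L.disj i j hne (hdi.trans hdj.symm)
      have hpi := hmem i hi
      have hpj := hmem j hj
      rw [hij] at hpi
      have hmem2 : pt j ∈ seg (L.q i) (L.d i) ∩ seg (L.q j) (L.d j) := ⟨hpi, hpj⟩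
      rw [hdisj] at hmem2
      exact hmem2
  -- per-direction totals
  set Nt : Fin 4 → ℕ := fun t => ∑ c : ZMod 5, a (t, c) with hNtdef
  have hFiber : ∀ t : Fin 4, ∑ z : ZMod 5 × ZMod 5, a (t, MS.lam t z) = 5 * Nt t := by
    intro t
    rw [← Finset.sum_fiberwise Finset.univ (fun z => MS.lam t z) (fun z => a (t, MS.lam t z))]
    simp only [hNtdef]
    rw [Finset.mul_sum]
    apply Finset.sum_congr rfl
    intro c _
    calc ∑ z ∈ Finset.univ.filter (fun z => MS.lam t z = c), a (t, MS.lam t z)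
        = ∑ _z ∈ Finset.univ.filter (fun z => MS.lam t z = c), a (t, c) :=
          Finset.sum_congr rfl (fun z hz => by rw [(Finset.mem_filter.mp hz).2])
      _ = 5 * a (t, c) := by rw [Finset.sum_const, MS.fiber_card t c, smul_eq_mul]
  have hNtk : ∀ t, Nt t ≤ k := by
    intro t
    have h1 : ∑ z : ZMod 5 × ZMod 5, a (t, MS.lam t z) ≤ ∑ z : ZMod 5 × ZMod 5, R z :=
      Finset.sum_le_sum (fun z _ => key t _ z rfl)
    rw [hFiber t, hsumR] at h1
    omega
  -- two directions with exactly k lines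
  have hsum4 : Nt 0 + Nt 1 + Nt 2 + Nt 3 = N := by
    rw [← Fin.sum_univ_four Nt]
    simp only [hNtdef]
    rw [← Fintype.sum_prod_type a]
    exact hsumA
  obtain ⟨t₁, t₂, hne12, hk1, hk2⟩ : ∃ t₁ t₂ : Fin 4, t₁ ≠ t₂ ∧ Nt t₁ = k ∧ Nt t₂ = k := by
    have h0 := hNtk 0
    have h1 := hNtk 1
    have h2 := hNtk 2
    have h3 := hNtk 3
    have hdisj2 : (Nt 0 = k ∧ Nt 1 = k) ∨ (Nt 0 = k ∧ Nt 2 = k) ∨ (Nt 0 = k ∧ Nt 3 = k)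
        ∨ (Nt 1 = k ∧ Nt 2 = k) ∨ (Nt 1 = k ∧ Nt 3 = k) ∨ (Nt 2 = k ∧ Nt 3 = k) := by
      omega
    rcases hdisj2 with ⟨ha1,ha2⟩|⟨ha1,ha2⟩|⟨ha1,ha2⟩|⟨ha1,ha2⟩|⟨ha1,ha2⟩|⟨ha1,ha2⟩
    exacts [⟨0,1,by decide,ha1,ha2⟩, ⟨0,2,by decide,ha1,ha2⟩, ⟨0,3,by decide,ha1,ha2⟩,
            ⟨1,2,by decide,ha1,ha2⟩, ⟨1,3,by decide,ha1,ha2⟩, ⟨2,3,by decide,ha1,ha2⟩]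
  -- final contradiction, in ℤ
  set A : ZMod 5 × ZMod 5 → ℤ := fun z => (a (t₁, MS.lam t₁ z) : ℤ) with hA
  set B : ZMod 5 × ZMod 5 → ℤ := fun z => (a (t₂, MS.lam t₂ z) : ℤ) with hB
  have hsumAz : ∑ z : ZMod 5 × ZMod 5, A z = 5 * (k : ℤ) := by
    simp only [hA]
    rw [← Nat.cast_sum]
    rw [hFiber t₁, hk1]
    push_cast
    ring
  have hsumBz : ∑ z : ZMod 5 × ZMod 5, B z = 5 * (k : ℤ) := by
    simp only [hB]
    rw [← Nat.cast_sum]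
    rw [hFiber t₂, hk2]
    push_cast
    ring
  have hmax : ∀ z : ZMod 5 × ZMod 5, max (A z) (B z) ≤ (R z : ℤ) := by
    intro z
    simp only [hA, hB]
    apply max_le
    · exact_mod_cast key t₁ _ z rfl
    · exact_mod_cast key t₂ _ z rfl
  have hsummax : ∑ z : ZMod 5 × ZMod 5, max (A z) (B z) ≤ (m : ℤ) := by
    calc ∑ z : ZMod 5 × ZMod 5, max (A z) (B z) ≤ ∑ z : ZMod 5 × ZMod 5, (R z : ℤ) :=
          Finset.sum_le_sum (fun z _ => hmax z)
      _ = (m : ℤ) := by rw [← Nat.cast_sum, hsumR]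
  have hptw : ∀ z : ZMod 5 × ZMod 5, |A z - B z| = 2 * max (A z) (B z) - A z - B z := by
    intro z
    have h1 := max_add_min (A z) (B z)
    calc |A z - B z| = |B z - A z| := abs_sub_comm _ _
      _ = max (A z) (B z) - min (A z) (B z) := (max_sub_min_eq_abs _ _).symm
      _ = 2 * max (A z) (B z) - A z - B z := by linarith
  have habs_le : ∑ z : ZMod 5 × ZMod 5, |A z - B z| ≤ 8 := by
    have heq : ∑ z : ZMod 5 × ZMod 5, |A z - B z|
        = 2 * (∑ z : ZMod 5 × ZMod 5, max (A z) (B z))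
          - (∑ z : ZMod 5 × ZMod 5, A z) - (∑ z : ZMod 5 × ZMod 5, B z) := by
      rw [Finset.sum_congr rfl (fun z _ => hptw z), Finset.sum_sub_distrib,
        Finset.sum_sub_distrib, ← Finset.mul_sum]
    rw [heq, hsumAz, hsumBz]
    have hmz : (m : ℤ) ≤ (k : ℤ) * 5 + 4 := by exact_mod_cast hm
    linarith
  have hlow : (10 : ℤ) ≤ ∑ z : ZMod 5 × ZMod 5, |A z - B z| := by
    have hfib : ∑ z : ZMod 5 × ZMod 5, |A z - B z|
        = ∑ j : ZMod 5, ∑ z ∈ Finset.univ.filter (fun z => MS.lam t₂ z = j), |A z - B z| :=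
      (Finset.sum_fiberwise _ _ _).symm
    have hj : ∀ j : ZMod 5,
        (2 : ℤ) ≤ ∑ z ∈ Finset.univ.filter (fun z => MS.lam t₂ z = j), |A z - B z| := by
      intro j
      have hBz : ∀ z ∈ Finset.univ.filter (fun z => MS.lam t₂ z = j), B z = (a (t₂, j) : ℤ) := by
        intro z hz
        simp only [hB]
        rw [(Finset.mem_filter.mp hz).2]
      have hAfib : ∑ z ∈ Finset.univ.filter (fun z => MS.lam t₂ z = j), A z = (k : ℤ) := by
        have hinj : ∀ z ∈ Finset.univ.filter (fun z => MS.lam t₂ z = j),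
            ∀ z' ∈ Finset.univ.filter (fun z => MS.lam t₂ z = j),
            MS.lam t₁ z = MS.lam t₁ z' → z = z' := by
          intro z hz z' hz' hzz
          exact MS.pair_inj t₁ t₂ hne12 z z' hzz
            (by rw [(Finset.mem_filter.mp hz).2, (Finset.mem_filter.mp hz').2])
        have himgsum := Finset.sum_image (f := fun c => (a (t₁, c) : ℤ)) hinj
        rw [MS.pair_image t₁ t₂ hne12 j] at himgsum
        simp only [hA]
        rw [← himgsum, ← Nat.cast_sum]
        have : ∑ c : ZMod 5, a (t₁, c) = k := hk1
        exact_mod_cast congrArg (Nat.cast : ℕ → ℤ) this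
      have hcard : (Finset.univ.filter (fun z => MS.lam t₂ z = j)).card = 5 :=
        MS.fiber_card t₂ j
      have htri := Finset.abs_sum_le_sum_abs (fun z => A z - B z)
        (Finset.univ.filter (fun z => MS.lam t₂ z = j))
      have hsub : ∑ z ∈ Finset.univ.filter (fun z => MS.lam t₂ z = j), (A z - B z)
          = (k : ℤ) - 5 * (a (t₂, j) : ℤ) := by
        rw [Finset.sum_sub_distrib, hAfib, Finset.sum_congr rfl hBz, Finset.sum_const, hcard]
        push_cast
        ring
      have habs2 : (2 : ℤ) ≤ |(k : ℤ) - 5 * (a (t₂, j) : ℤ)| := by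
        rcases abs_cases ((k : ℤ) - 5 * (a (t₂, j) : ℤ)) with ⟨he, _⟩ | ⟨he, _⟩ <;>
          rw [he] <;> omega
      rw [hsub] at htri
      linarith
    rw [hfib]
    calc (10 : ℤ) = ∑ _j : ZMod 5, (2 : ℤ) := by simp
      _ ≤ _ := Finset.sum_le_sum (fun j _ => hj j)
  linarith
end

section
/- For every integer N with 1 ≤ N ≤ 102 there exists a 5D-layout of N lines whose union covers at most N + 36 lattice points. Consequently, the Board Infeasibility Condition (that every 5D-layout of N lines covers more than N + 36 points) fails for all N ≤ 102, so the line-based counting approach cannot prove any upper bound on the Morpion Solitaire 5D score smaller than 102. -/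

def Qlist : List (ℤ × ℤ) := [(5, 23), (9, 19), (5, 23), (5, 21), (8, 20), (5, 21), (5, 19), (6, 19), (5, 22), (5, 24), (5, 19), (5, 17), (7, 20), (5, 20), (5, 20), (5, 18), (5, 18), (5, 22), (5, 24), (5, 25), (5, 18), (5, 21), (5, 26), (5, 23), (5, 27), (5, 25), (5, 22), (9, 24), (5, 23), (5, 26), (5, 24), (8, 25), (5, 25), (5, 27), (6, 24), (5, 29), (5, 28), (5, 28), (5, 26), (7, 25), (5, 29), (5, 30), (5, 28), (5, 31), (5, 20), (8, 15), (5, 19), (9, 14), (5, 17), (5, 16), (5, 18), (5, 16), (5, 15), (7, 15), (5, 15), (6, 14), (5, 13), (5, 14), (5, 13), (5, 14), (5, 17), (5, 16), (5, 13), (5, 12), (5, 15), (5, 30), (5, 32), (5, 27), (6, 29), (5, 31), (5, 33), (5, 28), (9, 29), (5, 29), (5, 32), (5, 34), (5, 12), (5, 11), (5, 14), (8, 10), (9, 9), (5, 13), (7, 10), (5, 11), (5, 10), (5, 10), (5, 9), (6, 9), (5, 8), (5, 8), (7, 30), (5, 33), (5, 30), (8, 30), (5, 31), (5, 34), (5,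 35), (5, 32), (5, 33), (5, 36), (5, 35), (5, 37)]
def Dlist : List (ℤ × ℤ) := [(1, 0), (0, 1), (1, -1), (1, 1), (0, 1), (1, 0), (1, 1), (0, 1), (1, 0), (1, -1), (1, 0), (1, 1), (0, 1), (1, 0), (1, 1), (0, 1), (1, 1), (1, -1), (1, 0), (1, -1), (1, 0), (1, -1), (1, -1), (0, 1), (1, -1), (1, 0), (1, 1), (0, 1), (1, 1), (1, 0), (1, 1), (0, 1), (1, 1), (1, 0), (0, 1), (1, -1), (1, -1), (1, 0), (1, 1), (0, 1), (1, 0), (1, -1), (0, 1), (1, -1), (1, -1), (0, 1), (1, -1), (0, 1), (1, 0), (1, 1), (1, -1), (1, 0), (1, 1), (0, 1), (1, 0), (0, 1), (1, 1), (1, 1), (0, 1), (1, 0), (1, -1), (1, -1), (1, 0), (1, 1), (1, -1), (1, 0), (1, -1), (1, 1), (0, 1), (1, 0), (1, -1), (1, 1), (0, 1), (1, 1), (1, 0), (1, -1), (1, 0), (1, 1), (1, -1), (0, 1), (0, 1), (1, -1), (0, 1), (1, 0), (1, 1), (1, 0), (1, 1), (0, 1), (0, 1), (1, 1), (0, 1),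 (1, 0), (1, 1), (0, 1), (1, 1), (1, 0), (1, -1), (1, 1), (0, 1), (1, -1), (1, 0), (1, -1)]
def PtList : List (ℤ × ℤ) := [(5, 23), (6, 23), (7, 23), (8, 23), (9, 23), (9, 19), (9, 20), (9, 21), (9, 22), (6, 22), (7, 21), (8, 20), (5, 21), (8, 24), (9, 25), (8, 21), (8, 22), (6, 21), (5, 19), (6, 20), (6, 19), (5, 22), (7, 22), (5, 24), (7, 19), (8, 19), (5, 17), (6, 18), (7, 20), (7, 24), (5, 20), (9, 24), (5, 18), (9, 18), (6, 24), (5, 25), (7, 18), (8, 18), (9, 17), (5, 26), (6, 25), (5, 27), (6, 26), (7, 25), (8, 25), (9, 26), (9, 27), (9, 28), (8, 26), (7, 26), (8, 27), (8, 28), (8, 29), (7, 27), (9, 29), (6, 27), (6, 28), (5, 29), (5, 28), (7, 28), (9, 30), (7, 29), (6, 29), (5, 30), (5, 31), (5, 32), (6, 30), (8, 17), (9, 16), (8, 15), (8, 16), (7, 17), (9, 15), (9, 14), (6, 17), (5, 16), (7, 16), (6, 16), (5, 15), (7, 15), (6, 15), (6, 14), (5, 13), (5, 14), (7, 14), (8,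 14), (9, 13), (8, 13), (9, 12), (6, 13), (7, 13), (5, 12), (8, 12), (9, 11), (7, 30), (8, 30), (6, 31), (9, 31), (6, 32), (6, 33), (7, 31), (8, 31), (5, 33), (9, 32), (9, 33), (8, 32), (7, 32), (5, 34), (6, 12), (7, 12), (5, 11), (8, 11), (9, 10), (8, 10), (9, 9), (7, 11), (7, 10), (6, 11), (5, 10), (6, 10), (5, 9), (6, 9), (5, 8), (7, 33), (7, 34), (8, 33), (9, 34), (8, 34), (9, 35), (6, 34), (5, 35), (8, 35), (9, 36), (5, 36), (5, 37), (6, 35), (7, 35), (6, 36)]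
def QQ (i : Fin 102) : ℤ × ℤ := Qlist.get (Fin.cast (by rfl) i)
def DD (i : Fin 102) : ℤ × ℤ := Dlist.get (Fin.cast (by rfl) i)
def PQ (i : Fin 138) : ℤ × ℤ := PtList.get (Fin.cast (by rfl) i)

def segL (q d : ℤ × ℤ) : List (ℤ × ℤ) := (List.range 5).map (fun t : ℕ => q + (t : ℤ) • d)

theorem seg_iff (q d x : ℤ × ℤ) : x ∈ seg q d ↔ x ∈ segL q d := by
  simp only [seg, Set.mem_setOf_eq, segL, List.mem_map, List.mem_range]
  constructor
  · rintro ⟨t, ht, rfl⟩; exact ⟨t, by omega, rfl⟩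
  · rintro ⟨t, ht, rfl⟩; exact ⟨t, by omega, rfl⟩

set_option maxRecDepth 1000000 in
set_option maxHeartbeats 2000000 in
theorem factNE : ∀ i j : Fin 102, i ≠ j →
    ∃ x ∈ segL (QQ i) (DD i), x ∉ segL (QQ j) (DD j) := by decide

set_option maxRecDepth 1000000 in
set_option maxHeartbeats 2000000 in
theorem factD : ∀ i j : Fin 102, i ≠ j → DD i = DD j →
    ∀ x ∈ segL (QQ i) (DD i), x ∉ segL (QQ j) (DD j) := by decide

set_option maxRecDepth 1000000 in
set_option maxHeartbeats 2000000 in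
theorem factC : ∀ i : Fin 102, ∀ x ∈ segL (QQ i) (DD i),
    ∃ j : Fin 138, (j : ℕ) ≤ (i : ℕ) + 36 ∧ PQ j = x := by decide

set_option maxRecDepth 1000000 in
set_option maxHeartbeats 400000 in
theorem fact4 : ∀ i : Fin 102, DD i = (1,0) ∨ DD i = (0,1) ∨ DD i = (1,1) ∨ DD i = (1,-1) := by
  decide

theorem Dmem (i : Fin 102) : DD i ∈ Dir := by
  rcases fact4 i with h | h | h | h <;> rw [h] <;> simp [Dir]

/-- For every `1 ≤ N ≤ 102` there is a 5D-layout of `N` lines covering at most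
`N + 36` lattice points; consequently the Board Infeasibility Condition fails
for all such `N`, so the line-based approach cannot prove an upper bound on
the 5D score smaller than `102`. -/
theorem exists_small_layout (N : ℕ) (h1 : 1 ≤ N) (h2 : N ≤ 102) :
    (∃ L : Layout N, L.covered.ncard ≤ N + 36) ∧
    ¬(∀ L : Layout N, N + 36 < L.covered.ncard) := by
  have key : ∃ L : Layout N, L.covered.ncard ≤ N + 36 := by
    have einj : Function.Injective (Fin.castLE h2) := Fin.castLE_injective h2
    refine ⟨⟨fun i => QQ (Fin.castLE h2 i), fun i => DD (Fin.castLE h2 i), fun i => Dmem _,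
      ?_, ?_⟩, ?_⟩
    · intro i j hij heq
      obtain ⟨x, hx1, hx2⟩ := factNE (Fin.castLE h2 i) (Fin.castLE h2 j)
        (fun hc => hij (einj hc))
      exact hx2 ((seg_iff _ _ x).mp (heq ▸ (seg_iff _ _ x).mpr hx1))
    · intro i j hij hd
      ext x
      simp only [Set.mem_inter_iff, Set.mem_empty_iff_false, iff_false, not_and]
      intro ha hb
      exact factD (Fin.castLE h2 i) (Fin.castLE h2 j) (fun hc => hij (einj hc)) hd x
        ((seg_iff _ _ x).mp ha) ((seg_iff _ _ x).mp hb)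
    · show (⋃ i, seg (QQ (Fin.castLE h2 i)) (DD (Fin.castLE h2 i))).ncard ≤ N + 36
      have hcast : N + 36 ≤ 138 := by omega
      set T : Finset (ℤ × ℤ) :=
        Finset.image (fun j : Fin (N + 36) => PQ (Fin.castLE hcast j)) Finset.univ with hT
      have hsub : (⋃ i, seg (QQ (Fin.castLE h2 i)) (DD (Fin.castLE h2 i))) ⊆
          (T : Set (ℤ × ℤ)) := by
        intro x hx
        simp only [Set.mem_iUnion] at hx
        obtain ⟨i, hx⟩ := hx
        rw [seg_iff] at hx
        obtain ⟨j, hj, hje⟩ := factC (Fin.castLE h2 i) x hx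
        have hjN : (j : ℕ) < N + 36 := by
          have : (i : ℕ) < N := i.2
          simp only [Fin.coe_castLE] at hj ⊢
          omega
        simp only [Finset.mem_coe, hT, Finset.mem_union, Finset.mem_image, Finset.mem_univ,
          true_and]
        exact ⟨⟨j, hjN⟩, by rw [← hje]; exact congrArg PQ (Fin.ext rfl)⟩
      calc (⋃ i, seg (QQ (Fin.castLE h2 i)) (DD (Fin.castLE h2 i))).ncard ≤ T.card := by
            rw [← Set.ncard_coe_finset]
            exact Set.ncard_le_ncard hsub T.finite_toSet
        _ ≤ (Finset.univ : Finset (Fin (N + 36))).card := Finset.card_image_le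
        _ = N + 36 := by simp
  obtain ⟨L, hL⟩ := key
  exact ⟨⟨L, hL⟩, fun h => absurd (h L) (not_lt.mpr hL)⟩
end
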